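/- For every k > 0, the level set {(u, v) ∈ ℝ² : (−3u² − v + 1/6)·exp(6v) = k} is a compact subset of ℝ². -/

import Mathlib

/-- For every `k > 0`, the level set `{(u, v) : (-3u² - v + 1/6)·exp(6v) = k}` of the
first integral `G` of the planar system `u' = -3u² - v`, `v' = u` is compact. -/
theorem stmt_11 (k : ℝ) (hk : 0 < k) :
    IsCompact {p : ℝ × ℝ | (-3*p.1^2 - p.2 + 1/6) * Real.exp (6*p.2) = k} := by
  rw [Metric.isCompact_iff_isClosed_bounded]
  constructor
  · apply isClosed_eq
    · fun_prop
    · exact continuous_const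
  · obtain ⟨M, hMdef⟩ : ∃ M : ℝ, M = 1/6 + 2/(9*k) := ⟨_, rfl⟩
    have h9k : (0:ℝ) < 9*k := by linarith
    have hMk : 9*k*M = 9*k*(1/6) + 2 := by rw [hMdef]; field_simp
    have hM16 : 1/6 ≤ M := by
      have : (0:ℝ) ≤ 2/(9*k) := by positivity
      linarith
    have hMpos : (0:ℝ) < M := by linarith
    apply Bornology.IsBounded.subset (Metric.isBounded_Icc (-(M+1), -(M+1)) (M+1, M+1))
    rintro ⟨u, v⟩ h
    simp only [Set.mem_setOf_eq] at h
    have hE : 0 < Real.exp (6*v) := Real.exp_pos _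
    have hA : 0 < -3*u^2 - v + 1/6 := by
      rcases mul_pos_iff.mp (h ▸ hk) with ⟨h1, _⟩ | ⟨_, h2⟩
      · exact h1
      · linarith
    have hku : k ≤ (1/6 - v) * Real.exp (6*v) := by nlinarith [sq_nonneg u]
    have hvlow : -M ≤ v := by
      rcases le_or_gt (-(1/6)) v with hv | hv
      · linarith
      · have hN : 9*v^2 ≤ Real.exp (-(6*v)) := by
          have h2 := Real.add_one_le_exp (-(3*v))
          have h3 : (0:ℝ) < -(3*v) := by linarith
          have h4 : Real.exp (-(3*v)) * Real.exp (-(3*v)) = Real.exp (-(6*v)) := by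
            rw [← Real.exp_add]; ring_nf
          nlinarith
        have hmul : Real.exp (6*v) * Real.exp (-(6*v)) = 1 := by
          rw [← Real.exp_add]; simp
        have hNpos : 0 < Real.exp (-(6*v)) := Real.exp_pos _
        have hkN : k * Real.exp (-(6*v)) ≤ 1/6 - v := by
          calc k * Real.exp (-(6*v)) ≤ ((1/6 - v) * Real.exp (6*v)) * Real.exp (-(6*v)) := by
                apply mul_le_mul_of_nonneg_right hku hNpos.le
            _ = 1/6 - v := by rw [mul_assoc, hmul, mul_one]
        -- 9k v² ≤ k * exp(-6v) ≤ 1/6 - v ≤ -2v, so v ≥ -2/(9k)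
        have h5 : 9*k*v^2 ≤ -2*v := by nlinarith
        have h6 : 9*k*v + 2 ≥ 0 := by nlinarith
        nlinarith [hMk]
    have hvhigh : v ≤ 1/6 := by nlinarith [sq_nonneg u]
    have hu2 : u^2 ≤ M := by nlinarith
    constructor
    · constructor
      · simp only; nlinarith [sq_nonneg (u+1)]
      · simp only; linarith
    · constructor
      · simp only; nlinarith [sq_nonneg (u-1)]
      · simp only; linarith
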